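/- Let f : M → M be continuous on a compact metric space, and suppose ν ∈ Per_f is supported on the orbit of a periodic point y₀ of period r that lies in a periodic shrinking set I of period p dividing r and with diam(I) < 1/q, and let x₀ be another point fixed by f^r with dist(y₀, x₀) < 1/q. Then for every ε > 0 there exists q such that d(μ₀, ν) < ε, where μ₀ := (1/r) Σ_{j=0}^{r−1} δ_{f^j(x₀)}; i.e., the periodic measure at x₀ can be approximated arbitrarily well by q-shrinked periodic measures, for q large, provided such y₀ always exist within distance 1/q of x₀. -/

import Mathlib

open MeasureTheory Filter Topology Metric Set Function
open scoped ENNReal NNReal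

lemma avg_integral {M : Type*} [MetricSpace M] [CompactSpace M]
    [MeasurableSpace M] [BorelSpace M] (g : M → ℝ) (hg : Continuous g)
    (r : ℕ) (z : ℕ → M) :
    ∫ x, g x ∂((r : ℝ≥0∞)⁻¹ • ∑ j ∈ Finset.range r, Measure.dirac (z j))
      = (r : ℝ)⁻¹ * ∑ j ∈ Finset.range r, g (z j) := by
  have hint : ∀ j ∈ Finset.range r, Integrable g (Measure.dirac (z j)) :=
    fun j _ => hg.integrable_of_hasCompactSupport (isClosed_tsupport g).isCompact
  rw [integral_smul_measure, integral_finset_sum_measure hint]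
  simp [integral_dirac, ENNReal.toReal_inv]


/-- The explicit metric `d` on measures induced by a countable dense family of test
functions, metrizing the weak* topology. -/
noncomputable def wd {M : Type*} [MetricSpace M] [MeasurableSpace M]
    (Ψ : ℕ → M → ℝ) (μ ν : Measure M) : ℝ :=
  ∑' i : ℕ, (1 / 2 : ℝ) ^ (i + 1) * |(∫ x, Ψ i x ∂μ) - ∫ x, Ψ i x ∂ν|

/-- For each period `r` and each `ε > 0` there is `q ≥ 1` such that: whenever `y₀` is a
periodic point of period `r` lying in a periodic shrinking set `I` of period `p ∣ r` with
`diam I < 1/q` (so that the periodic measure `ν` carried by the orbit of `y₀` is a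
`q`-shrinked periodic measure), and `x₀` is another point fixed by `f^[r]` with
`dist y₀ x₀ < 1/q`, then `d(μ₀, ν) < ε` for the periodic measure `μ₀` carried by the orbit
of `x₀`. -/
theorem stmt19 {M : Type*} [MetricSpace M] [CompactSpace M]
    [MeasurableSpace M] [BorelSpace M]
    (Ψ : ℕ → M → ℝ)
    (hΨc : ∀ i, Continuous (Ψ i))
    (hΨ01 : ∀ i x, Ψ i x ∈ Set.Icc (0 : ℝ) 1)
    (hdense : ∀ g : M → ℝ, Continuous g → (∀ x, g x ∈ Set.Icc (0 : ℝ) 1) →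
      ∀ ε > (0 : ℝ), ∃ i, ∀ x, |g x - Ψ i x| ≤ ε)
    (f : M → M) (hf : Continuous f)
    (r : ℕ) (hr : 1 ≤ r) :
    ∀ ε > (0 : ℝ), ∃ q : ℕ, 1 ≤ q ∧
      ∀ (x₀ y₀ : M) (I : Set M) (p : ℕ),
        IsOpen I → I.Nonempty → 1 ≤ p →
        (∀ i j, i < p → j < p → i ≠ j →
          Disjoint (f^[i] '' closure I) (f^[j] '' closure I)) →
        f^[p] '' closure I ⊆ I →
        diam I < 1 / q →
        p ∣ r →
        y₀ ∈ I → f^[r] y₀ = y₀ →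
        f^[r] x₀ = x₀ → dist y₀ x₀ < 1 / q →
        wd Ψ ((r : ℝ≥0∞)⁻¹ • ∑ j ∈ Finset.range r, Measure.dirac (f^[j] x₀))
            ((r : ℝ≥0∞)⁻¹ • ∑ j ∈ Finset.range r, Measure.dirac (f^[j] y₀)) < ε := by
  unfold wd
  intro ε hε
  obtain ⟨N, hN⟩ := exists_pow_lt_of_lt_one (show (0:ℝ) < ε/2 by linarith)
    (show (1/2 : ℝ) < 1 by norm_num)
  set G : M → (Fin N × Fin r → ℝ) := fun x p => Ψ p.1 (f^[(p.2 : ℕ)] x) with hG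
  have hGc : Continuous G := continuous_pi fun p => (hΨc p.1).comp (hf.iterate _)
  have hGu : UniformContinuous G := CompactSpace.uniformContinuous_of_continuous hGc
  rw [Metric.uniformContinuous_iff] at hGu
  obtain ⟨δ, hδ, hGd⟩ := hGu (ε/4) (by linarith)
  obtain ⟨q', hq'⟩ := exists_nat_one_div_lt hδ
  refine ⟨q' + 1, Nat.le_add_left 1 q', ?_⟩
  intro x₀ y₀ I p _ _ _ _ _ _ _ _ hy hx hdist
  have hdist' : dist y₀ x₀ < δ := by
    refine lt_trans ?_ hq'
    exact_mod_cast hdist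
  have hclose : ∀ i j, i < N → j < r →
      |Ψ i (f^[j] x₀) - Ψ i (f^[j] y₀)| ≤ ε/4 := by
    intro i j hi hj
    have h1 : dist (G y₀) (G x₀) < ε/4 := hGd hdist'
    have h2 := dist_le_pi_dist (G y₀) (G x₀) (⟨i, hi⟩, ⟨j, hj⟩)
    rw [Real.dist_eq] at h2
    simp only [hG] at h2
    rw [abs_sub_comm]
    exact le_of_lt (lt_of_le_of_lt h2 h1)
  set a : ℕ → ℝ := fun i =>
    |(∫ x, Ψ i x ∂((r : ℝ≥0∞)⁻¹ • ∑ j ∈ Finset.range r, Measure.dirac (f^[j] x₀)))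
      - ∫ x, Ψ i x ∂((r : ℝ≥0∞)⁻¹ • ∑ j ∈ Finset.range r, Measure.dirac (f^[j] y₀))| with ha
  have hrpos : (0:ℝ) < r := by exact_mod_cast hr
  have haval : ∀ i, a i = (r : ℝ)⁻¹ *
      |∑ j ∈ Finset.range r, (Ψ i (f^[j] x₀) - Ψ i (f^[j] y₀))| := by
    intro i
    rw [ha]
    simp only [avg_integral (Ψ i) (hΨc i) r, ← mul_sub, ← Finset.sum_sub_distrib, abs_mul]
    rw [abs_of_nonneg (by positivity : (0:ℝ) ≤ (r:ℝ)⁻¹)]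
  have ha1 : ∀ i, a i ≤ 1 := by
    intro i
    rw [haval i]
    calc (r : ℝ)⁻¹ * |∑ j ∈ Finset.range r, (Ψ i (f^[j] x₀) - Ψ i (f^[j] y₀))|
        ≤ (r : ℝ)⁻¹ * ∑ j ∈ Finset.range r, (1:ℝ) := by
          gcongr
          refine (Finset.abs_sum_le_sum_abs _ _).trans (Finset.sum_le_sum ?_)
          intro j _
          have h1 := hΨ01 i (f^[j] x₀)
          have h2 := hΨ01 i (f^[j] y₀)
          rw [abs_le]; constructor <;> [linarith [h1.1, h2.2]; linarith [h1.2, h2.1]]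
      _ = 1 := by
          simp only [Finset.sum_const, Finset.card_range, smul_eq_mul, nsmul_eq_mul, mul_one]
          field_simp
  have haN : ∀ i, i < N → a i ≤ ε/4 := by
    intro i hi
    rw [haval i]
    calc (r : ℝ)⁻¹ * |∑ j ∈ Finset.range r, (Ψ i (f^[j] x₀) - Ψ i (f^[j] y₀))|
        ≤ (r : ℝ)⁻¹ * ∑ j ∈ Finset.range r, (ε/4) := by
          gcongr
          refine (Finset.abs_sum_le_sum_abs _ _).trans (Finset.sum_le_sum ?_)
          exact fun j hj => hclose i j hi (Finset.mem_range.1 hj)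
      _ = ε/4 := by
          simp only [Finset.sum_const, Finset.card_range, smul_eq_mul, nsmul_eq_mul]
          field_simp
  have ha0 : ∀ i, 0 ≤ a i := fun i => abs_nonneg _
  have hgeo : Summable (fun i : ℕ => (1/2 : ℝ)^(i+1)) :=
    (summable_nat_add_iff 1).2 (summable_geometric_of_lt_one (by norm_num) (by norm_num))
  have htsum1 : ∑' i : ℕ, (1/2:ℝ)^(i+1) = 1 := by
    have : ∀ i : ℕ, (1/2:ℝ)^(i+1) = (1/2) * (1/2:ℝ)^i := fun i => by ring
    simp_rw [this]
    rw [tsum_mul_left, tsum_geometric_of_lt_one (by norm_num) (by norm_num)]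
    norm_num
  have hsum : Summable (fun i => (1/2 : ℝ)^(i+1) * a i) := by
    apply Summable.of_nonneg_of_le (fun i => mul_nonneg (by positivity) (ha0 i))
      (fun i => ?_) hgeo
    nlinarith [ha1 i, ha0 i, pow_pos (show (0:ℝ) < 1/2 by norm_num) (i+1)]
  rw [← Summable.sum_add_tsum_nat_add N hsum]
  have hcN : ∑ i ∈ Finset.range N, (1/2:ℝ)^(i+1) ≤ 1 := by
    calc ∑ i ∈ Finset.range N, (1/2:ℝ)^(i+1)
        ≤ ∑' i : ℕ, (1/2:ℝ)^(i+1) := Summable.sum_le_tsum _ (fun i _ => by positivity) hgeo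
      _ = 1 := htsum1
  have hpart1 : ∑ i ∈ Finset.range N, (1/2:ℝ)^(i+1) * a i ≤ ε/4 := by
    calc ∑ i ∈ Finset.range N, (1/2:ℝ)^(i+1) * a i
        ≤ ∑ i ∈ Finset.range N, (1/2:ℝ)^(i+1) * (ε/4) := by
          apply Finset.sum_le_sum
          intro i hi
          have := haN i (Finset.mem_range.1 hi)
          nlinarith [pow_pos (show (0:ℝ) < 1/2 by norm_num) (i+1)]
      _ = (ε/4) * ∑ i ∈ Finset.range N, (1/2:ℝ)^(i+1) := by
          rw [Finset.mul_sum]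
          exact Finset.sum_congr rfl (fun i _ => mul_comm _ _)
      _ ≤ (ε/4) * 1 := mul_le_mul_of_nonneg_left hcN (by linarith)
      _ = ε/4 := mul_one _
  have hsum' : Summable (fun i => (1/2:ℝ)^(i+N+1) * a (i+N)) := by
    have := (summable_nat_add_iff (f := fun i => (1/2:ℝ)^(i+1) * a i) N).2 hsum
    exact this
  have hpart2 : ∑' i : ℕ, (1/2:ℝ)^(i+N+1) * a (i+N) ≤ (1/2:ℝ)^N := by
    calc ∑' i : ℕ, (1/2:ℝ)^(i+N+1) * a (i+N)
        ≤ ∑' i : ℕ, (1/2:ℝ)^N * (1/2:ℝ)^(i+1) := by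
          apply Summable.tsum_le_tsum _ hsum' (hgeo.mul_left _)
          intro i
          have h1 : (1/2:ℝ)^(i+N+1) = (1/2:ℝ)^N * (1/2:ℝ)^(i+1) := by ring
          rw [h1]
          exact mul_le_of_le_one_right (by positivity) (ha1 _)
      _ = (1/2:ℝ)^N * ∑' i : ℕ, (1/2:ℝ)^(i+1) := tsum_mul_left
      _ = (1/2:ℝ)^N := by rw [htsum1, mul_one]
  calc ∑ i ∈ Finset.range N, (1/2:ℝ)^(i+1) * a i + ∑' i : ℕ, (1/2:ℝ)^(i+N+1) * a (i+N)
      ≤ ε/4 + (1/2:ℝ)^N := add_le_add hpart1 hpart2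
    _ < ε := by linarith
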